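/- For the network SI system x'(t) = β(I - diag(x(t)))A x(t) with A nonnegative irreducible and β > 0, if x(0) ∈ [0,1]^n and x(0) ≠ 0, then x_i(t) > 0 for every node i and every t > 0. -/

import Mathlib

open Real Set Filter

lemma sq_max_hasDerivAt (s0 : ℝ) :
    HasDerivAt (fun s : ℝ => (max s 0)^2) (2 * max s0 0) s0 := by
  rcases lt_trichotomy s0 0 with h | h | h
  · have he : (fun s : ℝ => (max s 0)^2) =ᶠ[nhds s0] fun _ => 0 := by
      filter_upwards [Iio_mem_nhds h] with s hs
      simp [max_eq_right (le_of_lt (mem_Iio.mp hs))]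
    rw [max_eq_right h.le, mul_zero]
    exact (hasDerivAt_const s0 (0:ℝ)).congr_of_eventuallyEq he
  · subst h
    rw [hasDerivAt_iff_tendsto_slope, max_self, mul_zero]
    apply squeeze_zero_norm (a := fun z : ℝ => |z|) ?_
      ((continuous_abs.tendsto' 0 0 abs_zero).mono_left nhdsWithin_le_nhds)
    intro z
    rcases eq_or_ne z 0 with rfl | hz
    · simp [slope]
    · rw [slope_def_field, Real.norm_eq_abs, abs_div]
      have h1 : |(max z 0)^2 - (max 0 0)^2| ≤ z^2 := by
        rw [max_self]
        norm_num
        rcases le_or_gt z 0 with h | h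
        · simp [max_eq_right h, sq_nonneg]
        · simp [max_eq_left h.le]
      calc |(max z 0)^2 - (max 0 0)^2| / |z - 0| ≤ z^2 / |z - 0| := by gcongr
        _ = |z| := by
            rw [sub_zero, ← sq_abs, sq, mul_div_assoc, div_self (abs_ne_zero.2 hz), mul_one]
  · have he : (fun s : ℝ => (max s 0)^2) =ᶠ[nhds s0] fun s => s^2 := by
      filter_upwards [Ioi_mem_nhds h] with s hs
      simp [max_eq_left (le_of_lt (mem_Ioi.mp hs))]
    rw [max_eq_left h.le]
    have h2 : HasDerivAt (fun s : ℝ => (max s 0)^2) ((2:ℕ) * s0^(2-1)) s0 :=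
      (hasDerivAt_pow 2 s0).congr_of_eventuallyEq he
    convert h2 using 1
    push_cast
    ring

lemma pow_entry_nonneg {n : ℕ} (A : Matrix (Fin n) (Fin n) ℝ)
    (hA : ∀ i j, 0 ≤ A i j) : ∀ (k : ℕ) (i j : Fin n), 0 ≤ (A ^ k) i j := by
  intro k
  induction k with
  | zero => intro i j; rw [pow_zero]; rw [Matrix.one_apply]; split <;> norm_num
  | succ k ih =>
      intro i j
      rw [pow_succ, Matrix.mul_apply]
      exact Finset.sum_nonneg fun p _ => mul_nonneg (ih i p) (hA p j)

/-- A nonnegative matrix is irreducible (its digraph is strongly connected). -/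
def MatIrreducible {n : ℕ} (A : Matrix (Fin n) (Fin n) ℝ) : Prop :=
  ∀ i j : Fin n, ∃ k : ℕ, 0 < (A ^ k) i j

/-- For the network SI system x' = β(I - diag(x))Ax with A nonnegative
irreducible and β > 0, if x(0) ∈ [0,1]^n and x(0) ≠ 0, then x_i(t) > 0 for every
node i and every t > 0. -/
theorem network_SI_positivity
    {n : ℕ} (A : Matrix (Fin n) (Fin n) ℝ)
    (hA : ∀ i j, 0 ≤ A i j) (hirr : MatIrreducible A)
    (β : ℝ) (hβ : 0 < β)
    (x : ℝ → Fin n → ℝ)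
    (hderiv : ∀ t : ℝ, 0 ≤ t → ∀ i,
      HasDerivAt (fun s => x s i) (β * (1 - x t i) * ∑ j, A i j * x t j) t)
    (hx0 : ∀ i, x 0 i ∈ Set.Icc (0:ℝ) 1)
    (hx0ne : x 0 ≠ 0) :
    ∀ t : ℝ, 0 < t → ∀ i, 0 < x t i := by
  -- Part 1: invariance of [0,1]^n
  have hinv : ∀ T : ℝ, 0 ≤ T → ∀ i, x T i ∈ Set.Icc (0:ℝ) 1 := by
    intro T hT
    -- continuity and bounds on [0, T]
    have hxc : ContinuousOn (fun s => x s) (Icc (0:ℝ) T) := by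
      apply continuousOn_pi.mpr
      intro i
      exact fun u hu => ((hderiv u hu.1 i).continuousAt).continuousWithinAt
    obtain ⟨C, hC⟩ := isCompact_Icc.exists_bound_of_continuousOn hxc
    set M := max C 0 with hMdef
    have hM0 : (0:ℝ) ≤ M := le_max_right _ _
    have hM : ∀ u ∈ Icc (0:ℝ) T, ∀ i, |x u i| ≤ M := by
      intro u hu i
      calc |x u i| = ‖x u i‖ := rfl
        _ ≤ ‖x u‖ := norm_le_pi_norm (x u) i
        _ ≤ C := hC u hu
        _ ≤ M := le_max_left _ _
    set a := ∑ i, ∑ j, A i j with hadef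
    have ha0 : 0 ≤ a := Finset.sum_nonneg fun i _ => Finset.sum_nonneg fun j _ => hA i j
    have haij : ∀ i j, A i j ≤ a := by
      intro i j
      calc A i j ≤ ∑ j, A i j :=
            Finset.single_le_sum (fun j _ => hA i j) (Finset.mem_univ j)
        _ ≤ a := Finset.single_le_sum
            (fun i _ => Finset.sum_nonneg fun j _ => hA i j) (Finset.mem_univ i)
    have hS : ∀ u ∈ Icc (0:ℝ) T, ∀ i, |∑ j, A i j * x u j| ≤ n * (a * M) := by
      intro u hu i
      calc |∑ j, A i j * x u j| ≤ ∑ j, |A i j * x u j| := Finset.abs_sum_le_sum_abs _ _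
        _ ≤ ∑ _j : Fin n, a * M := Finset.sum_le_sum (fun j _ => by
            rw [abs_mul, abs_of_nonneg (hA i j)]
            exact mul_le_mul (haij i j) (hM u hu j) (abs_nonneg _) ha0)
        _ = n * (a * M) := by
            rw [Finset.sum_const, Finset.card_univ, Fintype.card_fin, nsmul_eq_mul]
    set K1 := 2 * β * (n * (a * M)) with hK1
    set K2 := 2 * β * (1 + M) * a with hK2
    have hK10 : 0 ≤ K1 := by positivity
    have hK20 : 0 ≤ K2 :=
      mul_nonneg (mul_nonneg (by linarith) (by linarith)) ha0
    set f : ℝ → ℝ := fun u => ∑ i, ((max (x u i - 1) 0)^2 + (max (-(x u i)) 0)^2) with hfdef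
    have hf0 : ∀ u, 0 ≤ f u :=
      fun u => Finset.sum_nonneg fun i _ => add_nonneg (sq_nonneg _) (sq_nonneg _)
    set f' : ℝ → ℝ := fun u => ∑ i,
      (2 * max (x u i - 1) 0 - 2 * max (-(x u i)) 0) *
        (β * (1 - x u i) * ∑ j, A i j * x u j) with hf'def
    have hfD : ∀ u, 0 ≤ u → HasDerivAt f (f' u) u := by
      intro u hu
      apply HasDerivAt.fun_sum
      intro i _
      have h1 : HasDerivAt (fun s => (max (x s i - 1) 0)^2)
          (2 * max (x u i - 1) 0 * (β * (1 - x u i) * ∑ j, A i j * x u j)) u :=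
        by have := (sq_max_hasDerivAt (x u i - 1)).comp u ((hderiv u hu i).sub_const 1); exact this
      have h2 : HasDerivAt (fun s => (max (-(x s i)) 0)^2)
          (2 * max (-(x u i)) 0 * (-(β * (1 - x u i) * ∑ j, A i j * x u j))) u :=
        by have := (sq_max_hasDerivAt (-(x u i))).comp u (hderiv u hu i).neg; exact this
      convert h1.fun_add h2 using 1
      ring
    have hbound : ∀ u ∈ Ico (0:ℝ) T, f' u ≤ (K1 + n * K2) * f u + 0 := by
      intro u hu
      have huI : u ∈ Icc (0:ℝ) T := ⟨hu.1, hu.2.le⟩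
      have key : ∀ i,
          (2 * max (x u i - 1) 0 - 2 * max (-(x u i)) 0) *
            (β * (1 - x u i) * ∑ j, A i j * x u j)
          ≤ K1 * (max (x u i - 1) 0)^2
            + K2 * (max (-(x u i)) 0 * ∑ j, max (-(x u j)) 0) := by
        intro i
        have hsm0 : 0 ≤ ∑ j, max (-(x u j)) 0 :=
          Finset.sum_nonneg fun j _ => le_max_right _ _
        have hm0 : 0 ≤ max (-(x u i)) 0 := le_max_right _ _
        have hp0 : 0 ≤ max (x u i - 1) 0 := le_max_right _ _
        rcases le_or_gt (x u i) 1 with h1 | h1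
        · rcases le_or_gt 0 (x u i) with h0 | h0
          · rw [max_eq_right (by linarith : x u i - 1 ≤ 0),
                max_eq_right (by linarith : -(x u i) ≤ 0)]
            norm_num
          · -- x u i < 0
            have hpz : max (x u i - 1) 0 = 0 := max_eq_right (by linarith)
            have hmz : max (-(x u i)) 0 = -(x u i) := max_eq_left (by linarith)
            have hmS : -(∑ j, A i j * x u j) ≤ a * ∑ j, max (-(x u j)) 0 := by
              rw [← Finset.sum_neg_distrib]
              calc ∑ j, -(A i j * x u j) ≤ ∑ j, a * max (-(x u j)) 0 := by
                    apply Finset.sum_le_sum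
                    intro j _
                    have h1' : -(A i j * x u j) = A i j * (-(x u j)) := by ring
                    rw [h1']
                    calc A i j * (-(x u j)) ≤ A i j * max (-(x u j)) 0 :=
                          mul_le_mul_of_nonneg_left (le_max_left _ _) (hA i j)
                      _ ≤ a * max (-(x u j)) 0 :=
                          mul_le_mul_of_nonneg_right (haij i j) (le_max_right _ _)
                _ = a * ∑ j, max (-(x u j)) 0 := by rw [Finset.mul_sum]
            have hMX : 0 ≤ M + x u i := by
              have := (abs_le.mp (hM u huI i)).1; linarith
            have hc0 : 0 ≤ 2 * (-(x u i)) * β * (1 - x u i) := by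
              have : (0:ℝ) ≤ -(x u i) := by linarith
              have : (0:ℝ) ≤ 1 - x u i := by linarith
              positivity
            have hchain :
                (2 * max (x u i - 1) 0 - 2 * max (-(x u i)) 0) *
                  (β * (1 - x u i) * ∑ j, A i j * x u j)
                ≤ K2 * (max (-(x u i)) 0 * ∑ j, max (-(x u j)) 0) := by
              rw [hpz, hmz]
              calc (2 * 0 - 2 * (-(x u i))) * (β * (1 - x u i) * ∑ j, A i j * x u j)
                  = (2 * (-(x u i)) * β * (1 - x u i)) * (-(∑ j, A i j * x u j)) := by ring
                _ ≤ (2 * (-(x u i)) * β * (1 - x u i)) * (a * ∑ j, max (-(x u j)) 0) :=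
                    mul_le_mul_of_nonneg_left hmS hc0
                _ ≤ (2 * (-(x u i)) * β * (1 + M)) * (a * ∑ j, max (-(x u j)) 0) := by
                    apply mul_le_mul_of_nonneg_right ?_ (mul_nonneg ha0 hsm0)
                    have hfac : 0 ≤ 2 * (-(x u i)) * β * (M + x u i) := by
                      have hx' : (0:ℝ) ≤ -(x u i) := by linarith
                      have := mul_nonneg (mul_nonneg (mul_nonneg (by norm_num : (0:ℝ) ≤ 2) hx') hβ.le) hMX
                      linarith [this]
                    nlinarith [hfac]
                _ = K2 * ((-(x u i)) * ∑ j, max (-(x u j)) 0) := by rw [hK2]; ring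
            have hrest : 0 ≤ K1 * (max (x u i - 1) 0)^2 := mul_nonneg hK10 (sq_nonneg _)
            linarith [hchain, hrest]
        · -- x u i > 1
          have hmz : max (-(x u i)) 0 = 0 := max_eq_right (by linarith)
          have hpz : max (x u i - 1) 0 = x u i - 1 := max_eq_left (by linarith)
          have hSb := hS u huI i
          have hchain :
              (2 * max (x u i - 1) 0 - 2 * max (-(x u i)) 0) *
                (β * (1 - x u i) * ∑ j, A i j * x u j)
              ≤ K1 * (max (x u i - 1) 0)^2 := by
            rw [hpz, hmz]
            calc (2 * (x u i - 1) - 2 * 0) * (β * (1 - x u i) * ∑ j, A i j * x u j)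
                = (2 * β * (x u i - 1)^2) * (-(∑ j, A i j * x u j)) := by ring
              _ ≤ (2 * β * (x u i - 1)^2) * (n * (a * M)) := by
                  apply mul_le_mul_of_nonneg_left ((neg_le_abs _).trans hSb) (by positivity)
              _ = K1 * (x u i - 1)^2 := by rw [hK1]; ring
          have hrest : 0 ≤ K2 * (max (-(x u i)) 0 * ∑ j, max (-(x u j)) 0) :=
            mul_nonneg hK20 (mul_nonneg hm0 hsm0)
          linarith [hchain, hrest]
      have hsum := Finset.sum_le_sum (s := Finset.univ) (fun i _ => key i)
      have hsplit : ∑ i, (K1 * (max (x u i - 1) 0)^2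
            + K2 * (max (-(x u i)) 0 * ∑ j, max (-(x u j)) 0))
          = K1 * (∑ i, (max (x u i - 1) 0)^2)
            + K2 * ((∑ i, max (-(x u i)) 0) * (∑ j, max (-(x u j)) 0)) := by
        rw [Finset.sum_add_distrib, ← Finset.mul_sum, ← Finset.mul_sum, ← Finset.sum_mul]
      have hsq : (∑ i, max (-(x u i)) 0) * (∑ j, max (-(x u j)) 0)
          ≤ n * ∑ i, (max (-(x u i)) 0)^2 := by
        have := sq_sum_le_card_mul_sum_sq (s := Finset.univ)
          (f := fun i : Fin n => max (-(x u i)) 0)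
        rw [Finset.card_univ, Fintype.card_fin] at this
        calc (∑ i, max (-(x u i)) 0) * (∑ j, max (-(x u j)) 0)
            = (∑ i, max (-(x u i)) 0)^2 := by rw [sq]
          _ ≤ n * ∑ i, (max (-(x u i)) 0)^2 := this
      have hfu : f u = (∑ i, (max (x u i - 1) 0)^2) + ∑ i, (max (-(x u i)) 0)^2 := by
        simp only [hfdef, Finset.sum_add_distrib]
      have hp2 : 0 ≤ ∑ i, (max (x u i - 1) 0)^2 :=
        Finset.sum_nonneg fun i _ => sq_nonneg _
      have hm2 : 0 ≤ ∑ i, (max (-(x u i)) 0)^2 :=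
        Finset.sum_nonneg fun i _ => sq_nonneg _
      have e1 : K1 * (∑ i, (max (x u i - 1) 0)^2) ≤ K1 * f u := by
        apply mul_le_mul_of_nonneg_left ?_ hK10
        rw [hfu]; linarith
      have e2 : K2 * ((∑ i, max (-(x u i)) 0) * (∑ j, max (-(x u j)) 0))
          ≤ K2 * (n * f u) := by
        apply mul_le_mul_of_nonneg_left ?_ hK20
        calc (∑ i, max (-(x u i)) 0) * (∑ j, max (-(x u j)) 0)
            ≤ n * ∑ i, (max (-(x u i)) 0)^2 := hsq
          _ ≤ n * f u := by
              apply mul_le_mul_of_nonneg_left ?_ (Nat.cast_nonneg n)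
              rw [hfu]; linarith
      calc f' u ≤ ∑ i, (K1 * (max (x u i - 1) 0)^2
            + K2 * (max (-(x u i)) 0 * ∑ j, max (-(x u j)) 0)) := hsum
        _ = K1 * (∑ i, (max (x u i - 1) 0)^2)
            + K2 * ((∑ i, max (-(x u i)) 0) * (∑ j, max (-(x u j)) 0)) := hsplit
        _ ≤ K1 * f u + K2 * (n * f u) := add_le_add e1 e2
        _ = (K1 + n * K2) * f u + 0 := by ring
    have hcontf : ContinuousOn f (Icc (0:ℝ) T) :=
      fun u hu => ((hfD u hu.1).continuousAt).continuousWithinAt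
    have hfa : f 0 ≤ 0 := by
      have : f 0 = 0 := Finset.sum_eq_zero fun i _ => by
        have h := hx0 i
        rw [max_eq_right (by linarith [h.2] : x 0 i - 1 ≤ 0),
            max_eq_right (by linarith [h.1] : -(x 0 i) ≤ 0)]
        norm_num
      linarith
    have hgron := le_gronwallBound_of_liminf_deriv_right_le (f := f) (f' := f')
      (δ := 0) (K := K1 + n * K2) (ε := 0) hcontf
      (fun u hu r hr => by
        have hds : HasDerivWithinAt f (f' u) (Ici u) u := (hfD u hu.1).hasDerivWithinAt
        refine (hds.liminf_right_slope_le hr).mono fun z hz => ?_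
        rwa [slope_def_field, div_eq_inv_mul] at hz)
      hfa hbound T (right_mem_Icc.mpr hT)
    rw [gronwallBound_ε0_δ0] at hgron
    have hfT : f T = 0 := le_antisymm hgron (hf0 T)
    have hterm := (Finset.sum_eq_zero_iff_of_nonneg
      (fun i _ => add_nonneg (sq_nonneg _) (sq_nonneg _))).mp hfT
    intro i
    have hi := hterm i (Finset.mem_univ i)
    have hsq1 : (max (x T i - 1) 0)^2 = 0 := by
      nlinarith [sq_nonneg (max (x T i - 1) 0), sq_nonneg (max (-(x T i)) 0)]
    have hsq2 : (max (-(x T i)) 0)^2 = 0 := by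
      nlinarith [sq_nonneg (max (x T i - 1) 0), sq_nonneg (max (-(x T i)) 0)]
    have hpz : max (x T i - 1) 0 = 0 := (pow_eq_zero_iff (by norm_num : (2:ℕ) ≠ 0)).mp hsq1
    have hmz : max (-(x T i)) 0 = 0 := (pow_eq_zero_iff (by norm_num : (2:ℕ) ≠ 0)).mp hsq2
    constructor
    · have := max_eq_right_iff.mp hmz; linarith
    · have := max_eq_right_iff.mp hpz; linarith
  -- Part 2: monotonicity of each coordinate on [0, ∞)
  have hmono : ∀ i, MonotoneOn (fun s => x s i) (Ici (0:ℝ)) := by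
    intro i
    apply monotoneOn_of_deriv_nonneg (convex_Ici 0)
    · exact fun u hu => ((hderiv u hu i).continuousAt).continuousWithinAt
    · intro u hu
      rw [interior_Ici] at hu
      exact ((hderiv u hu.le i).differentiableAt).differentiableWithinAt
    · intro u hu
      rw [interior_Ici] at hu
      rw [(hderiv u hu.le i).deriv]
      have h1 := hinv u hu.le
      apply mul_nonneg (mul_nonneg hβ.le (by linarith [(h1 i).2]))
      exact Finset.sum_nonneg fun j _ => mul_nonneg (hA i j) ((h1 j).1)
  -- Part 3: spreading along an edge
  have hspread : ∀ i p : Fin n, 0 < A i p → (∀ s : ℝ, 0 < s → 0 < x s p) →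
      ∀ t : ℝ, 0 < t → 0 < x t i := by
    intro i p hip hp t ht
    rcases lt_or_ge 0 (x t i) with h | h
    · exact h
    exfalso
    have hti : x t i = 0 := le_antisymm h (hinv t ht.le i).1
    have hs : (0:ℝ) < t/2 := by linarith
    have hst : t/2 < t := by linarith
    have hz : ∀ u, u ∈ Icc (t/2) t → x u i = 0 := by
      intro u hu
      have h0u : (0:ℝ) ≤ u := le_trans hs.le hu.1
      refine le_antisymm ?_ (hinv u h0u i).1
      calc x u i ≤ x t i := hmono i (mem_Ici.mpr h0u) (mem_Ici.mpr ht.le) hu.2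
        _ = 0 := hti
    have hstrict : StrictMonoOn (fun u => x u i) (Icc (t/2) t) := by
      apply strictMonoOn_of_deriv_pos (convex_Icc _ _)
      · exact fun u hu => ((hderiv u (le_trans hs.le hu.1) i).continuousAt).continuousWithinAt
      · intro u hu
        rw [interior_Icc] at hu
        have h0u : (0:ℝ) ≤ u := le_trans hs.le hu.1.le
        rw [(hderiv u h0u i).deriv]
        have hui : x u i = 0 := hz u ⟨hu.1.le, hu.2.le⟩
        have hSp : A i p * x (t/2) p ≤ ∑ j, A i j * x u j := by
          calc A i p * x (t/2) p ≤ A i p * x u p := by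
                apply mul_le_mul_of_nonneg_left ?_ (hA i p)
                exact hmono p (mem_Ici.mpr hs.le) (mem_Ici.mpr h0u) hu.1.le
            _ ≤ ∑ j, A i j * x u j := Finset.single_le_sum
                (fun j _ => mul_nonneg (hA i j) (hinv u h0u j).1) (Finset.mem_univ p)
        have hpos : (0:ℝ) < ∑ j, A i j * x u j :=
          lt_of_lt_of_le (mul_pos hip (hp _ hs)) hSp
        rw [hui]
        nlinarith [mul_pos hβ hpos]
    have hlt := hstrict (left_mem_Icc.mpr hst.le) (right_mem_Icc.mpr hst.le) hst
    simp only [] at hlt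
    rw [hz _ (left_mem_Icc.mpr hst.le), hti] at hlt
    exact absurd hlt (lt_irrefl 0)
  -- Part 4: induction along paths from a positive node
  have hex : ∃ j0, 0 < x 0 j0 := by
    by_contra hc
    push_neg at hc
    exact hx0ne (funext fun j => le_antisymm (hc j) (hx0 j).1)
  obtain ⟨j0, hj0⟩ := hex
  have hj0t : ∀ t : ℝ, 0 ≤ t → 0 < x t j0 :=
    fun t ht => lt_of_lt_of_le hj0 (hmono j0 (mem_Ici.mpr le_rfl) (mem_Ici.mpr ht) ht)
  have hpow : ∀ (k : ℕ) (i : Fin n), 0 < (A ^ k) i j0 → ∀ t : ℝ, 0 < t → 0 < x t i := by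
    intro k
    induction k with
    | zero =>
        intro i h t ht
        rw [pow_zero, Matrix.one_apply] at h
        by_cases hij : i = j0
        · subst hij; exact hj0t t ht.le
        · simp [hij] at h
    | succ k ih =>
        intro i h t ht
        rw [pow_succ', Matrix.mul_apply] at h
        have hex2 : ∃ p, 0 < A i p * (A ^ k) p j0 := by
          by_contra hc
          push_neg at hc
          have : ∑ p, A i p * (A ^ k) p j0 ≤ 0 := Finset.sum_nonpos fun p _ => hc p
          linarith
        obtain ⟨p, hp⟩ := hex2
        have h1 : 0 < A i p := by
          rcases mul_pos_iff.mp hp with ⟨h1, _⟩ | ⟨h1, _⟩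
          · exact h1
          · exact absurd h1 (not_lt.mpr (hA i p))
        have h2 : 0 < (A ^ k) p j0 := by
          rcases mul_pos_iff.mp hp with ⟨_, h2⟩ | ⟨_, h2⟩
          · exact h2
          · exact absurd h2 (not_lt.mpr (pow_entry_nonneg A hA k p j0))
        exact hspread i p h1 (fun s hs => ih p h2 s hs) t ht
  intro t ht i
  obtain ⟨k, hk⟩ := hirr i j0
  exact hpow k i hk t ht
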